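/- Suppose y : {(s,t) : s,t ≥ 0} × ℝⁿ → ℝⁿ satisfies, for s ≤ t, the integral equation for its derivative in η: ∂y/∂η(s,t,η) = Φ(s,t) - ∫_s^t Φ(s,r) ∂₂f(r, y(r,t,η)) ∂y/∂η(r,t,η) dr, where ‖Φ(s,r)‖ ≤ K₀ e^{a|s-r|+εr} and ‖∂₂f(r,x)‖ ≤ L e^{-θr} with K₀ ≥ 1, a > 0, L > 0, 0 ≤ ε < θ. Then ‖∂y/∂η(s,t,η)‖ ≤ K₀ e^{a|s-t|+εt} e^{LK₀/(θ-ε)} for all s, t ≥ 0 and η ∈ ℝⁿ. -/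

import Mathlib

open Real MeasureTheory intervalIntegral


/-- Integral Gronwall inequality, backward form. -/
lemma gronwall_int_left {w k : ℝ → ℝ} {C s t : ℝ} (hst : s ≤ t) (hC : 0 ≤ C)
    (hw : Continuous w) (hk : Continuous k) (hk0 : ∀ r, 0 ≤ k r)
    (h : ∀ u ∈ Set.Icc s t, w u ≤ C + ∫ r in u..t, k r * w r) :
    w s ≤ C * exp (∫ r in s..t, k r) := by
  set F : ℝ → ℝ := fun u => ∫ r in u..t, k r * w r with hFdef
  set Ek : ℝ → ℝ := fun u => ∫ r in u..t, k r with hEkdef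
  set G : ℝ → ℝ := fun u => (C + F u) * exp (-(Ek u)) with hGdef
  have hkw : Continuous fun r => k r * w r := hk.mul hw
  have hFd : ∀ u : ℝ, HasDerivAt F (-(k u * w u)) u := fun u =>
    intervalIntegral.integral_hasDerivAt_left (hkw.intervalIntegrable _ _)
      (hkw.stronglyMeasurable.stronglyMeasurableAtFilter) hkw.continuousAt
  have hEd : ∀ u : ℝ, HasDerivAt Ek (-(k u)) u := fun u =>
    intervalIntegral.integral_hasDerivAt_left (hk.intervalIntegrable _ _)
      (hk.stronglyMeasurable.stronglyMeasurableAtFilter) hk.continuousAt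
  have hGd : ∀ u : ℝ, HasDerivAt G ((k u * ((C + F u) - w u)) * exp (-(Ek u))) u := by
    intro u
    have h1 : HasDerivAt (fun u => C + F u) (-(k u * w u)) u := (hFd u).const_add C
    have h2 : HasDerivAt (fun u => exp (-(Ek u))) (exp (-(Ek u)) * (k u)) u := by
      have := ((hEd u).neg).exp
      simpa using this
    have h3 : HasDerivAt (fun u => (C + F u) * exp (-(Ek u))) _ u := h1.mul h2
    convert h3 using 1
    ring
  have hmono : MonotoneOn G (Set.Icc s t) := by
    apply monotoneOn_of_deriv_nonneg (convex_Icc s t)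
    · exact fun x _ => ((hGd x).differentiableAt.continuousAt).continuousWithinAt
    · exact fun x _ => (hGd x).differentiableAt.differentiableWithinAt
    · intro x hx
      rw [(hGd x).deriv]
      have hx' : x ∈ Set.Icc s t := interior_subset hx
      have hsub : 0 ≤ (C + F x) - w x := sub_nonneg.mpr (h x hx')
      exact mul_nonneg (mul_nonneg (hk0 x) hsub) (exp_pos _).le
  have hGt : G t = C := by
    simp [hGdef, hFdef, hEkdef, intervalIntegral.integral_same]
  have h1 : G s ≤ C := by
    rw [← hGt]
    exact hmono (Set.left_mem_Icc.2 hst) (Set.right_mem_Icc.2 hst) hst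
  have h2 : C + F s ≤ C * exp (Ek s) := by
    have h3 : (C + F s) * exp (-(Ek s)) ≤ C := h1
    rw [exp_neg] at h3
    calc C + F s = (C + F s) * (exp (Ek s))⁻¹ * exp (Ek s) := by
          field_simp
      _ ≤ C * exp (Ek s) := by
          exact mul_le_mul_of_nonneg_right h3 (exp_pos _).le
  exact le_trans (h s (Set.left_mem_Icc.2 hst)) h2

/-- Integral Gronwall inequality, forward form. -/
lemma gronwall_int_right {w k : ℝ → ℝ} {C s t : ℝ} (hst : t ≤ s) (hC : 0 ≤ C)
    (hw : Continuous w) (hk : Continuous k) (hk0 : ∀ r, 0 ≤ k r)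
    (h : ∀ u ∈ Set.Icc t s, w u ≤ C + ∫ r in t..u, k r * w r) :
    w s ≤ C * exp (∫ r in t..s, k r) := by
  set F : ℝ → ℝ := fun u => ∫ r in t..u, k r * w r with hFdef
  set Ek : ℝ → ℝ := fun u => ∫ r in t..u, k r with hEkdef
  set G : ℝ → ℝ := fun u => (C + F u) * exp (-(Ek u)) with hGdef
  have hkw : Continuous fun r => k r * w r := hk.mul hw
  have hFd : ∀ u : ℝ, HasDerivAt F (k u * w u) u := fun u =>
    intervalIntegral.integral_hasDerivAt_right (hkw.intervalIntegrable _ _)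
      (hkw.stronglyMeasurable.stronglyMeasurableAtFilter) hkw.continuousAt
  have hEd : ∀ u : ℝ, HasDerivAt Ek (k u) u := fun u =>
    intervalIntegral.integral_hasDerivAt_right (hk.intervalIntegrable _ _)
      (hk.stronglyMeasurable.stronglyMeasurableAtFilter) hk.continuousAt
  have hGd : ∀ u : ℝ, HasDerivAt G (-((k u * ((C + F u) - w u)) * exp (-(Ek u)))) u := by
    intro u
    have h1 : HasDerivAt (fun u => C + F u) (k u * w u) u := (hFd u).const_add C
    have h2 : HasDerivAt (fun u => exp (-(Ek u))) (exp (-(Ek u)) * (-(k u))) u := by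
      have := ((hEd u).neg).exp
      simpa using this
    have h3 : HasDerivAt (fun u => (C + F u) * exp (-(Ek u))) _ u := h1.mul h2
    convert h3 using 1
    ring
  have hmono : AntitoneOn G (Set.Icc t s) := by
    apply antitoneOn_of_deriv_nonpos (convex_Icc t s)
    · exact fun x _ => ((hGd x).differentiableAt.continuousAt).continuousWithinAt
    · exact fun x _ => (hGd x).differentiableAt.differentiableWithinAt
    · intro x hx
      rw [(hGd x).deriv]
      have hx' : x ∈ Set.Icc t s := interior_subset hx
      have hsub : 0 ≤ (C + F x) - w x := sub_nonneg.mpr (h x hx')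
      simpa using mul_nonneg (mul_nonneg (hk0 x) hsub) (exp_pos (-(Ek x))).le
  have hGt : G t = C := by
    simp [hGdef, hFdef, hEkdef, intervalIntegral.integral_same]
  have h1 : G s ≤ C := by
    rw [← hGt]
    exact hmono (Set.left_mem_Icc.2 hst) (Set.right_mem_Icc.2 hst) hst
  have h2 : C + F s ≤ C * exp (Ek s) := by
    have h3 : (C + F s) * exp (-(Ek s)) ≤ C := h1
    rw [exp_neg] at h3
    calc C + F s = (C + F s) * (exp (Ek s))⁻¹ * exp (Ek s) := by
          field_simp
      _ ≤ C * exp (Ek s) := mul_le_mul_of_nonneg_right h3 (exp_pos _).le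
  exact le_trans (h s (Set.right_mem_Icc.2 hst)) h2

/-- Bound on the derivative of the solution of the perturbed system with respect to
the initial condition, under nonuniform bounded growth. -/
theorem stmt_11 {E : Type*} [NormedAddCommGroup E] [NormedSpace ℝ E] [CompleteSpace E]
    (K₀ a L ε θ : ℝ) (hK₀ : 1 ≤ K₀) (ha : 0 < a) (hL : 0 < L)
    (hε : 0 ≤ ε) (hεθ : ε < θ)
    (Φ : ℝ → ℝ → E →L[ℝ] E) (y : ℝ → ℝ → E → E)
    (D₂f : ℝ → E → E →L[ℝ] E) (Dy : ℝ → ℝ → E → E →L[ℝ] E)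
    (hΦ : ∀ s r : ℝ, 0 ≤ s → 0 ≤ r → ‖Φ s r‖ ≤ K₀ * exp (a * |s - r| + ε * r))
    (hD₂f : ∀ r : ℝ, 0 ≤ r → ∀ x : E, ‖D₂f r x‖ ≤ L * exp (-θ * r))
    (hDycont : ∀ t : ℝ, ∀ η : E, Continuous fun s => Dy s t η)
    (heq : ∀ s t : ℝ, 0 ≤ s → 0 ≤ t → ∀ η : E,
      Dy s t η = Φ s t
        - ∫ r in s..t, (Φ s r).comp ((D₂f r (y r t η)).comp (Dy r t η))) :
    ∀ s t : ℝ, 0 ≤ s → 0 ≤ t → ∀ η : E,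
      ‖Dy s t η‖ ≤ K₀ * exp (a * |s - t| + ε * t) * exp (L * K₀ / (θ - ε)) := by
  intro s t hs ht η
  have hK0 : (0:ℝ) < K₀ := lt_of_lt_of_le one_pos hK₀
  have hθε : (0:ℝ) < θ - ε := by linarith
  -- abbreviations (as plain functions, not `set`)
  have hwc : Continuous (fun r : ℝ => exp (-(a * |r - t|)) * ‖Dy r t η‖) :=
    (((continuous_const.mul ((continuous_id.sub continuous_const).abs)).neg).rexp).mul
      (hDycont t η).norm
  have hkc : Continuous (fun r : ℝ => K₀ * L * exp ((ε - θ) * r)) :=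
    continuous_const.mul ((continuous_const.mul continuous_id).rexp)
  have hk0 : ∀ r : ℝ, 0 ≤ K₀ * L * exp ((ε - θ) * r) := fun r =>
    mul_nonneg (mul_nonneg hK0.le hL.le) (exp_pos _).le
  have hw0 : ∀ r : ℝ, 0 ≤ exp (-(a * |r - t|)) * ‖Dy r t η‖ := fun r =>
    mul_nonneg (exp_pos _).le (norm_nonneg _)
  have hC : (0:ℝ) ≤ K₀ * exp (ε * t) := mul_nonneg hK0.le (exp_pos _).le
  -- the shared pointwise kernel bound
  have hpt : ∀ u r : ℝ, 0 ≤ u → 0 ≤ r → r ∈ Set.uIcc u t →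
      ‖((Φ u r).comp ((D₂f r (y r t η)).comp (Dy r t η)) : E →L[ℝ] E)‖ ≤
        exp (a * |u - t|) *
          (K₀ * L * exp ((ε - θ) * r) * (exp (-(a * |r - t|)) * ‖Dy r t η‖)) := by
    intro u r hu0 hr0 hr
    have habs : |u - t| = |u - r| + |r - t| := by
      rcases le_total u t with h | h
      · rw [Set.uIcc_of_le h] at hr
        obtain ⟨h1, h2⟩ := hr
        rw [abs_of_nonpos (by linarith), abs_of_nonpos (by linarith),
          abs_of_nonpos (by linarith)]
        ring
      · rw [Set.uIcc_of_ge h] at hr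
        obtain ⟨h1, h2⟩ := hr
        rw [abs_of_nonneg (by linarith), abs_of_nonneg (by linarith),
          abs_of_nonneg (by linarith)]
        ring
    have b1 := ((Φ u r).opNorm_comp_le ((D₂f r (y r t η)).comp (Dy r t η)))
    have b2 := ((D₂f r (y r t η)).opNorm_comp_le (Dy r t η))
    calc ‖((Φ u r).comp ((D₂f r (y r t η)).comp (Dy r t η)) : E →L[ℝ] E)‖
        ≤ ‖Φ u r‖ * ‖(D₂f r (y r t η)).comp (Dy r t η)‖ := b1
      _ ≤ (K₀ * exp (a * |u - r| + ε * r)) * (L * exp (-θ * r) * ‖Dy r t η‖) := by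
          apply mul_le_mul (hΦ u r hu0 hr0)
            (le_trans b2 (mul_le_mul_of_nonneg_right (hD₂f r hr0 _) (norm_nonneg _)))
            (norm_nonneg _) (mul_nonneg hK0.le (exp_pos _).le)
      _ = exp (a * |u - t|) *
            (K₀ * L * exp ((ε - θ) * r) * (exp (-(a * |r - t|)) * ‖Dy r t η‖)) := by
          rw [habs]
          rw [show K₀ * exp (a * |u - r| + ε * r) * (L * exp (-θ * r) * ‖Dy r t η‖)
              = K₀ * L * ‖Dy r t η‖ * (exp (a * |u - r| + ε * r) * exp (-θ * r)) from by
            ring, ← exp_add]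
          rw [show exp (a * (|u - r| + |r - t|)) *
              (K₀ * L * exp ((ε - θ) * r) * (exp (-(a * |r - t|)) * ‖Dy r t η‖))
              = K₀ * L * ‖Dy r t η‖ *
                (exp (a * (|u - r| + |r - t|)) * exp ((ε - θ) * r) * exp (-(a * |r - t|)))
              from by ring, ← exp_add, ← exp_add]
          congr 2
          ring
  -- exponent integral bound, for any 0 ≤ p ≤ q
  have hexpint : ∀ p q : ℝ, 0 ≤ p → p ≤ q →
      (∫ r in p..q, K₀ * L * exp ((ε - θ) * r)) ≤ K₀ * L / (θ - ε) := by
    intro p q hp hpq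
    have hd : ∀ x ∈ Set.uIcc p q,
        HasDerivAt (fun r => K₀ * L / (ε - θ) * exp ((ε - θ) * r))
          (K₀ * L * exp ((ε - θ) * x)) x := by
      intro x _
      have h1 : HasDerivAt (fun r : ℝ => (ε - θ) * r) (ε - θ) x := by
        simpa using (hasDerivAt_id x).const_mul (ε - θ)
      have h2 : HasDerivAt (fun r => K₀ * L / (ε - θ) * exp ((ε - θ) * r)) _ x :=
        (h1.exp).const_mul (K₀ * L / (ε - θ))
      have hne : ε - θ ≠ 0 := ne_of_lt (by linarith)
      convert h2 using 1
      field_simp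
    have hint := intervalIntegral.integral_eq_sub_of_hasDerivAt hd
      ((continuous_const.mul ((continuous_const.mul continuous_id).rexp)).intervalIntegrable p q)
    rw [hint]
    have hY : exp ((ε - θ) * p) ≤ 1 := exp_le_one_iff.mpr (by nlinarith)
    have hX : 0 < exp ((ε - θ) * q) := exp_pos _
    have hc : 0 < K₀ * L / (θ - ε) := by positivity
    have key : K₀ * L / (ε - θ) * exp ((ε - θ) * q) - K₀ * L / (ε - θ) * exp ((ε - θ) * p)
        = K₀ * L / (θ - ε) * (exp ((ε - θ) * p) - exp ((ε - θ) * q)) := by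
      rw [show ε - θ = -(θ - ε) from by ring, div_neg]
      ring
    rw [key]
    have : exp ((ε - θ) * p) - exp ((ε - θ) * q) ≤ 1 := by linarith
    calc K₀ * L / (θ - ε) * (exp ((ε - θ) * p) - exp ((ε - θ) * q))
        ≤ K₀ * L / (θ - ε) * 1 := mul_le_mul_of_nonneg_left this hc.le
      _ = K₀ * L / (θ - ε) := mul_one _
  -- the key Gronwall estimate on w s
  have hW : exp (-(a * |s - t|)) * ‖Dy s t η‖ ≤
      K₀ * exp (ε * t) * exp (K₀ * L / (θ - ε)) := by
    rcases le_total s t with hst | hst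
    · -- s ≤ t
      have key : ∀ u ∈ Set.Icc s t,
          exp (-(a * |u - t|)) * ‖Dy u t η‖ ≤ K₀ * exp (ε * t) +
            ∫ r in u..t, (K₀ * L * exp ((ε - θ) * r)) *
              (exp (-(a * |r - t|)) * ‖Dy r t η‖) := by
        intro u hu
        obtain ⟨hsu, hut⟩ := hu
        have hu0 : 0 ≤ u := le_trans hs hsu
        have hF0 : 0 ≤ ∫ r in u..t, (K₀ * L * exp ((ε - θ) * r)) *
            (exp (-(a * |r - t|)) * ‖Dy r t η‖) :=
          intervalIntegral.integral_nonneg hut fun r _ => mul_nonneg (hk0 r) (hw0 r)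
        have heqq := heq u t hu0 ht η
        by_cases hint : IntervalIntegrable
            (fun r => (Φ u r).comp ((D₂f r (y r t η)).comp (Dy r t η))) volume u t
        · -- integrable case
          have hφu : ‖Dy u t η‖ ≤ K₀ * exp (a * |u - t| + ε * t) +
              exp (a * |u - t|) * ∫ r in u..t, (K₀ * L * exp ((ε - θ) * r)) *
                (exp (-(a * |r - t|)) * ‖Dy r t η‖) := by
            rw [heqq]
            refine le_trans (norm_sub_le _ _) ?_
            gcongr
            · exact hΦ u t hu0 ht
            · calc ‖∫ r in u..t, (Φ u r).comp ((D₂f r (y r t η)).comp (Dy r t η))‖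
                  ≤ ∫ r in u..t, ‖(Φ u r).comp ((D₂f r (y r t η)).comp (Dy r t η))‖ :=
                    intervalIntegral.norm_integral_le_integral_norm hut
                _ ≤ ∫ r in u..t, exp (a * |u - t|) * ((K₀ * L * exp ((ε - θ) * r)) *
                      (exp (-(a * |r - t|)) * ‖Dy r t η‖)) := by
                    apply intervalIntegral.integral_mono_on hut hint.norm
                      ((continuous_const.mul (hkc.mul hwc)).intervalIntegrable u t)
                    intro r hr
                    exact hpt u r hu0 (le_trans hu0 hr.1)
                      (Set.mem_uIcc.2 (Or.inl ⟨hr.1, hr.2⟩))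
                _ = exp (a * |u - t|) * ∫ r in u..t, (K₀ * L * exp ((ε - θ) * r)) *
                      (exp (-(a * |r - t|)) * ‖Dy r t η‖) := by
                    rw [intervalIntegral.integral_const_mul]
          have := mul_le_mul_of_nonneg_left hφu (exp_pos (-(a * |u - t|))).le
          calc exp (-(a * |u - t|)) * ‖Dy u t η‖
              ≤ exp (-(a * |u - t|)) * (K₀ * exp (a * |u - t| + ε * t) +
                exp (a * |u - t|) * ∫ r in u..t, (K₀ * L * exp ((ε - θ) * r)) *
                  (exp (-(a * |r - t|)) * ‖Dy r t η‖)) := this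
            _ = K₀ * exp (ε * t) + ∫ r in u..t, (K₀ * L * exp ((ε - θ) * r)) *
                  (exp (-(a * |r - t|)) * ‖Dy r t η‖) := by
                rw [mul_add, show exp (-(a * |u - t|)) * (K₀ * exp (a * |u - t| + ε * t))
                    = K₀ * (exp (-(a * |u - t|)) * exp (a * |u - t| + ε * t)) from by ring,
                  ← exp_add, show -(a * |u - t|) + (a * |u - t| + ε * t) = ε * t from by ring,
                  show exp (-(a * |u - t|)) * (exp (a * |u - t|) *
                    ∫ r in u..t, (K₀ * L * exp ((ε - θ) * r)) *
                      (exp (-(a * |r - t|)) * ‖Dy r t η‖))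
                    = (exp (-(a * |u - t|)) * exp (a * |u - t|)) *
                    ∫ r in u..t, (K₀ * L * exp ((ε - θ) * r)) *
                      (exp (-(a * |r - t|)) * ‖Dy r t η‖) from by ring,
                  ← exp_add, show -(a * |u - t|) + a * |u - t| = 0 from by ring, exp_zero,
                  one_mul]
        · -- non-integrable case: the integral is zero
          rw [heqq, intervalIntegral.integral_undef hint, sub_zero]
          have h1 : ‖Φ u t‖ ≤ K₀ * exp (a * |u - t| + ε * t) := hΦ u t hu0 ht
          have h2 := mul_le_mul_of_nonneg_left h1 (exp_pos (-(a * |u - t|))).le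
          refine le_trans h2 (le_trans (le_of_eq ?_) (le_add_of_nonneg_right hF0))
          rw [show exp (-(a * |u - t|)) * (K₀ * exp (a * |u - t| + ε * t))
              = K₀ * (exp (-(a * |u - t|)) * exp (a * |u - t| + ε * t)) from by ring,
            ← exp_add, show -(a * |u - t|) + (a * |u - t| + ε * t) = ε * t from by ring]
      have hgron := gronwall_int_left hst hC hwc hkc hk0 key
      refine le_trans hgron ?_
      exact mul_le_mul_of_nonneg_left (exp_le_exp.2 (hexpint s t hs hst)) hC
    · -- t ≤ s
      have key : ∀ u ∈ Set.Icc t s,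
          exp (-(a * |u - t|)) * ‖Dy u t η‖ ≤ K₀ * exp (ε * t) +
            ∫ r in t..u, (K₀ * L * exp ((ε - θ) * r)) *
              (exp (-(a * |r - t|)) * ‖Dy r t η‖) := by
        intro u hu
        obtain ⟨htu, hus⟩ := hu
        have hu0 : 0 ≤ u := le_trans ht htu
        have hF0 : 0 ≤ ∫ r in t..u, (K₀ * L * exp ((ε - θ) * r)) *
            (exp (-(a * |r - t|)) * ‖Dy r t η‖) :=
          intervalIntegral.integral_nonneg htu fun r _ => mul_nonneg (hk0 r) (hw0 r)
        have heqq := heq u t hu0 ht η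
        by_cases hint : IntervalIntegrable
            (fun r => (Φ u r).comp ((D₂f r (y r t η)).comp (Dy r t η))) volume u t
        · have hφu : ‖Dy u t η‖ ≤ K₀ * exp (a * |u - t| + ε * t) +
              exp (a * |u - t|) * ∫ r in t..u, (K₀ * L * exp ((ε - θ) * r)) *
                (exp (-(a * |r - t|)) * ‖Dy r t η‖) := by
            rw [heqq]
            refine le_trans (norm_sub_le _ _) ?_
            gcongr
            · exact hΦ u t hu0 ht
            · rw [intervalIntegral.integral_symm, norm_neg]
              calc ‖∫ r in t..u, (Φ u r).comp ((D₂f r (y r t η)).comp (Dy r t η))‖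
                  ≤ ∫ r in t..u, ‖(Φ u r).comp ((D₂f r (y r t η)).comp (Dy r t η))‖ :=
                    intervalIntegral.norm_integral_le_integral_norm htu
                _ ≤ ∫ r in t..u, exp (a * |u - t|) * ((K₀ * L * exp ((ε - θ) * r)) *
                      (exp (-(a * |r - t|)) * ‖Dy r t η‖)) := by
                    apply intervalIntegral.integral_mono_on htu hint.symm.norm
                      ((continuous_const.mul (hkc.mul hwc)).intervalIntegrable t u)
                    intro r hr
                    exact hpt u r hu0 (le_trans ht hr.1)
                      (Set.mem_uIcc.2 (Or.inr ⟨hr.1, hr.2⟩))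
                _ = exp (a * |u - t|) * ∫ r in t..u, (K₀ * L * exp ((ε - θ) * r)) *
                      (exp (-(a * |r - t|)) * ‖Dy r t η‖) := by
                    rw [intervalIntegral.integral_const_mul]
          have := mul_le_mul_of_nonneg_left hφu (exp_pos (-(a * |u - t|))).le
          calc exp (-(a * |u - t|)) * ‖Dy u t η‖
              ≤ exp (-(a * |u - t|)) * (K₀ * exp (a * |u - t| + ε * t) +
                exp (a * |u - t|) * ∫ r in t..u, (K₀ * L * exp ((ε - θ) * r)) *
                  (exp (-(a * |r - t|)) * ‖Dy r t η‖)) := this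
            _ = K₀ * exp (ε * t) + ∫ r in t..u, (K₀ * L * exp ((ε - θ) * r)) *
                  (exp (-(a * |r - t|)) * ‖Dy r t η‖) := by
                rw [mul_add, show exp (-(a * |u - t|)) * (K₀ * exp (a * |u - t| + ε * t))
                    = K₀ * (exp (-(a * |u - t|)) * exp (a * |u - t| + ε * t)) from by ring,
                  ← exp_add, show -(a * |u - t|) + (a * |u - t| + ε * t) = ε * t from by ring,
                  show exp (-(a * |u - t|)) * (exp (a * |u - t|) *
                    ∫ r in t..u, (K₀ * L * exp ((ε - θ) * r)) *
                      (exp (-(a * |r - t|)) * ‖Dy r t η‖))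
                    = (exp (-(a * |u - t|)) * exp (a * |u - t|)) *
                    ∫ r in t..u, (K₀ * L * exp ((ε - θ) * r)) *
                      (exp (-(a * |r - t|)) * ‖Dy r t η‖) from by ring,
                  ← exp_add, show -(a * |u - t|) + a * |u - t| = 0 from by ring, exp_zero,
                  one_mul]
        · rw [heqq, intervalIntegral.integral_undef hint, sub_zero]
          have h1 : ‖Φ u t‖ ≤ K₀ * exp (a * |u - t| + ε * t) := hΦ u t hu0 ht
          have h2 := mul_le_mul_of_nonneg_left h1 (exp_pos (-(a * |u - t|))).le
          refine le_trans h2 (le_trans (le_of_eq ?_) (le_add_of_nonneg_right hF0))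
          rw [show exp (-(a * |u - t|)) * (K₀ * exp (a * |u - t| + ε * t))
              = K₀ * (exp (-(a * |u - t|)) * exp (a * |u - t| + ε * t)) from by ring,
            ← exp_add, show -(a * |u - t|) + (a * |u - t| + ε * t) = ε * t from by ring]
      have hgron := gronwall_int_right hst hC hwc hkc hk0 key
      refine le_trans hgron ?_
      exact mul_le_mul_of_nonneg_left (exp_le_exp.2 (hexpint t s ht hst)) hC
  -- conclude
  have hfin : ‖Dy s t η‖ = exp (a * |s - t|) * (exp (-(a * |s - t|)) * ‖Dy s t η‖) := by
    rw [← mul_assoc, ← exp_add]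
    simp
  rw [hfin, mul_comm L K₀]
  calc exp (a * |s - t|) * (exp (-(a * |s - t|)) * ‖Dy s t η‖)
      ≤ exp (a * |s - t|) * (K₀ * exp (ε * t) * exp (K₀ * L / (θ - ε))) :=
        mul_le_mul_of_nonneg_left hW (exp_pos _).le
    _ = K₀ * exp (a * |s - t| + ε * t) * exp (K₀ * L / (θ - ε)) := by
        rw [exp_add]; ring
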